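/- If a graph G is proportionally 2-choosable, then G is a linear forest whose largest component has at most 5 vertices and all of whose other components have at most 2 vertices. -/

import Mathlib

open Finset

variable {V : Type*}

/-- The size of the color class of `c` under coloring `f`. -/
def colorClass [Fintype V] (f : V → ℕ) (c : ℕ) : ℕ :=
  (Finset.univ.filter fun v => f v = c).card

/-- The multiplicity of color `c` in the list assignment `L`. -/
def eta [Fintype V] (L : V → Finset ℕ) (c : ℕ) : ℕ :=
  (Finset.univ.filter fun v => c ∈ L v).card

/-- `f` is a proper `L`-coloring of `G`. -/
def IsProperListColoring (G : SimpleGraph V) (L : V → Finset ℕ) (f : V → ℕ) : Prop :=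
  (∀ v, f v ∈ L v) ∧ ∀ u v, G.Adj u v → f u ≠ f v

/-- `f` is a proportional `L`-coloring of `G`, for `k`-assignments `L`:
each palette color's class has size `⌊η/k⌋` or `⌈η/k⌉`. -/
def IsProportionalColoring [Fintype V] (G : SimpleGraph V) (L : V → Finset ℕ) (k : ℕ)
    (f : V → ℕ) : Prop :=
  IsProperListColoring G L f ∧
  ∀ c : ℕ, (∃ v, c ∈ L v) →
    colorClass f c = eta L c / k ∨ colorClass f c = (eta L c + k - 1) / k

/-- `G` is proportionally `k`-choosable. -/
def ProportionallyChoosable [Fintype V] (G : SimpleGraph V) (k : ℕ) : Prop :=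
  ∀ L : V → Finset ℕ, (∀ v, (L v).card = k) →
    ∃ f : V → ℕ, IsProportionalColoring G L k f

/-- `G` is a linear forest: an acyclic graph with maximum degree at most 2. -/
def IsLinearForest (G : SimpleGraph V) : Prop :=
  G.IsAcyclic ∧ ∀ v : V, (G.neighborSet v).ncard ≤ 2

/-- Every component of `G` has at most 5 vertices, and at most one component
has more than 2 vertices. -/
def SmallComponents (G : SimpleGraph V) : Prop :=
  (∀ c : G.ConnectedComponent, c.supp.ncard ≤ 5) ∧
  ∀ c d : G.ConnectedComponent, c ≠ d → c.supp.ncard ≤ 2 ∨ d.supp.ncard ≤ 2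

/-! ### Auxiliary lemmas -/

section Aux

variable {G : SimpleGraph V}

lemma aux_reduction [Fintype V] (h : ProportionallyChoosable G 2)
    {m N : ℕ} (x : Fin m → V) (hx : Function.Injective x)
    (ℓ : Fin m → Finset ℕ) (hc : ∀ i, (ℓ i).card = 2)
    (hN : ∀ i, ∀ c ∈ ℓ i, c < N) :
    ∃ f : Fin m → ℕ, (∀ i, f i ∈ ℓ i) ∧
      (∀ i j, G.Adj (x i) (x j) → f i ≠ f j) ∧
      ∀ c : ℕ, (∃ i, c ∈ ℓ i) →
        ((univ.filter fun i => f i = c).card = (univ.filter fun i => c ∈ ℓ i).card / 2 ∨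
         (univ.filter fun i => f i = c).card = ((univ.filter fun i => c ∈ ℓ i).card + 1) / 2) := by
  classical
  set L : V → Finset ℕ := fun v => if hv : ∃ i, x i = v then ℓ hv.choose else {N, N + 1} with hL
  have hLx : ∀ i, L (x i) = ℓ i := by
    intro i
    have hv : ∃ j, x j = x i := ⟨i, rfl⟩
    have : hv.choose = i := hx hv.choose_spec
    simp only [hL, dif_pos hv, this]
  have hLout : ∀ v, (¬ ∃ i, x i = v) → L v = {N, N + 1} := by
    intro v hv; simp only [hL, dif_neg hv]
  have hcard : ∀ v, (L v).card = 2 := by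
    intro v
    by_cases hv : ∃ i, x i = v
    · obtain ⟨i, rfl⟩ := hv; rw [hLx]; exact hc i
    · rw [hLout v hv]
      rw [Finset.card_insert_of_notMem (by simp), Finset.card_singleton]
  obtain ⟨f, ⟨⟨hmem, hprop⟩, hcount⟩⟩ := h L hcard
  refine ⟨fun i => f (x i), fun i => by rw [← hLx i]; exact hmem (x i),
    fun i j hij hf => hprop _ _ hij hf, ?_⟩
  intro c hc0
  obtain ⟨i₀, hi₀⟩ := hc0
  have hcN : c < N := hN i₀ c hi₀
  have key1 : (univ.filter fun v => f v = c) = (univ.filter fun i => f (x i) = c).image x := by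
    ext v
    simp only [mem_filter, mem_univ, true_and, Finset.mem_image]
    constructor
    · intro hv
      by_cases hvr : ∃ i, x i = v
      · obtain ⟨i, rfl⟩ := hvr; exact ⟨i, by simpa using hv, rfl⟩
      · exfalso
        have := hmem v
        rw [hLout v hvr] at this
        simp only [Finset.mem_insert, Finset.mem_singleton] at this
        omega
    · rintro ⟨i, hi, rfl⟩; simpa using hi
  have key2 : (univ.filter fun v => c ∈ L v) = (univ.filter fun i => c ∈ ℓ i).image x := by
    ext v
    simp only [mem_filter, mem_univ, true_and, Finset.mem_image]
    constructor
    · intro hv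
      by_cases hvr : ∃ i, x i = v
      · obtain ⟨i, rfl⟩ := hvr; rw [hLx] at hv; exact ⟨i, by simpa using hv, rfl⟩
      · exfalso
        rw [hLout v hvr] at hv
        simp only [Finset.mem_insert, Finset.mem_singleton] at hv
        omega
    · rintro ⟨i, hi, rfl⟩; rw [hLx]; simpa using hi
  have := hcount c ⟨x i₀, by rw [hLx]; exact hi₀⟩
  unfold colorClass eta at this
  rw [key1, key2, Finset.card_image_of_injective _ hx,
    Finset.card_image_of_injective _ hx] at this
  simpa using this

/-- A finite "bad gadget" certificate. -/
abbrev GadgetOK {m : ℕ} (ℓ : Fin m → Finset ℕ) (E : List (Fin m × Fin m)) (P : List ℕ)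
    (g : (i : Fin m) → (ℓ i : Finset ℕ)) : Prop :=
  (∀ p ∈ E, (g p.1 : ℕ) ≠ (g p.2 : ℕ)) ∧
  ∀ c ∈ P,
    ((univ.filter fun i => (g i : ℕ) = c).card = (univ.filter fun i => c ∈ ℓ i).card / 2 ∨
     (univ.filter fun i => (g i : ℕ) = c).card = ((univ.filter fun i => c ∈ ℓ i).card + 1) / 2)

lemma aux_no_gadget [Fintype V] (h : ProportionallyChoosable G 2)
    {m N : ℕ} (x : Fin m → V) (hx : Function.Injective x)
    (ℓ : Fin m → Finset ℕ) (E : List (Fin m × Fin m)) (P : List ℕ)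
    (hc : ∀ i, (ℓ i).card = 2) (hN : ∀ i, ∀ c ∈ ℓ i, c < N)
    (hP : ∀ c ∈ P, ∃ i, c ∈ ℓ i)
    (hE : ∀ p ∈ E, G.Adj (x p.1) (x p.2))
    (hbad : ∀ g, ¬ GadgetOK ℓ E P g) : False := by
  obtain ⟨f, hmem, hprop, hcount⟩ := aux_reduction h x hx ℓ hc hN
  exact hbad (fun i => ⟨f i, hmem i⟩)
    ⟨fun p hp => hprop _ _ (hE p hp), fun c hcP => hcount c (hP c hcP)⟩

lemma aux_inj3 {a b c : V} (hnd : [a,b,c].Nodup) : Function.Injective ![a,b,c] := by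
  have h : ∀ i : Fin 3, ![a,b,c] i = [a,b,c].get (Fin.cast (by simp) i) := by
    intro i; fin_cases i <;> rfl
  intro i j hij
  rw [h i, h j] at hij
  exact Fin.cast_injective _ (List.nodup_iff_injective_get.mp hnd hij)

lemma aux_inj4 {a b c d : V} (hnd : [a,b,c,d].Nodup) : Function.Injective ![a,b,c,d] := by
  have h : ∀ i : Fin 4, ![a,b,c,d] i = [a,b,c,d].get (Fin.cast (by simp) i) := by
    intro i; fin_cases i <;> rfl
  intro i j hij
  rw [h i, h j] at hij
  exact Fin.cast_injective _ (List.nodup_iff_injective_get.mp hnd hij)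

lemma aux_inj5 {a b c d e : V} (hnd : [a,b,c,d,e].Nodup) : Function.Injective ![a,b,c,d,e] := by
  have h : ∀ i : Fin 5, ![a,b,c,d,e] i = [a,b,c,d,e].get (Fin.cast (by simp) i) := by
    intro i; fin_cases i <;> rfl
  intro i j hij
  rw [h i, h j] at hij
  exact Fin.cast_injective _ (List.nodup_iff_injective_get.mp hnd hij)

lemma aux_inj6 {a b c d e f : V} (hnd : [a,b,c,d,e,f].Nodup) :
    Function.Injective ![a,b,c,d,e,f] := by
  have h : ∀ i : Fin 6, ![a,b,c,d,e,f] i = [a,b,c,d,e,f].get (Fin.cast (by simp) i) := by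
    intro i; fin_cases i <;> rfl
  intro i j hij
  rw [h i, h j] at hij
  exact Fin.cast_injective _ (List.nodup_iff_injective_get.mp hnd hij)

lemma aux_no_claw [Fintype V] (h : ProportionallyChoosable G 2) {v a b c : V}
    (hnd : [v,a,b,c].Nodup) (h1 : G.Adj v a) (h2 : G.Adj v b) (h3 : G.Adj v c) : False := by
  refine aux_no_gadget (N := 4) h ![v,a,b,c] (aux_inj4 hnd)
    ![{0,1},{0,1},{0,1},{0,1}] [(0,1),(0,2),(0,3)] [0,1]
    (by decide) (by decide) (by decide) ?_ (by decide)
  intro p hp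
  fin_cases hp
  · exact h1
  · exact h2
  · exact h3

lemma aux_no_c3 [Fintype V] (h : ProportionallyChoosable G 2) {a b c : V}
    (hnd : [a,b,c].Nodup) (h1 : G.Adj a b) (h2 : G.Adj b c) (h3 : G.Adj c a) : False := by
  refine aux_no_gadget (N := 4) h ![a,b,c] (aux_inj3 hnd)
    ![{0,1},{0,1},{0,1}] [(0,1),(1,2),(2,0)] [0,1]
    (by decide) (by decide) (by decide) ?_ (by decide)
  intro p hp
  fin_cases hp
  · exact h1
  · exact h2
  · exact h3

lemma aux_no_c4 [Fintype V] (h : ProportionallyChoosable G 2) {a b c d : V}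
    (hnd : [a,b,c,d].Nodup) (h1 : G.Adj a b) (h2 : G.Adj b c) (h3 : G.Adj c d)
    (h4 : G.Adj d a) : False := by
  refine aux_no_gadget (N := 4) h ![a,b,c,d] (aux_inj4 hnd)
    ![{0,1},{0,2},{0,1},{0,2}] [(0,1),(1,2),(2,3),(3,0)] [0,1,2]
    (by decide) (by decide) (by decide) ?_ (by decide)
  intro p hp
  fin_cases hp
  · exact h1
  · exact h2
  · exact h3
  · exact h4

lemma aux_no_c5 [Fintype V] (h : ProportionallyChoosable G 2) {a b c d e : V}
    (hnd : [a,b,c,d,e].Nodup) (h1 : G.Adj a b) (h2 : G.Adj b c) (h3 : G.Adj c d)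
    (h4 : G.Adj d e) (h5 : G.Adj e a) : False := by
  refine aux_no_gadget (N := 4) h ![a,b,c,d,e] (aux_inj5 hnd)
    ![{0,1},{0,1},{0,1},{0,1},{0,1}] [(0,1),(1,2),(2,3),(3,4),(4,0)] [0,1]
    (by decide) (by decide) (by decide) ?_ (by decide)
  intro p hp
  fin_cases hp
  · exact h1
  · exact h2
  · exact h3
  · exact h4
  · exact h5

lemma aux_no_two_p3 [Fintype V] (h : ProportionallyChoosable G 2) {a b c d e f : V}
    (hnd : [a,b,c,d,e,f].Nodup) (h1 : G.Adj a b) (h2 : G.Adj b c) (h3 : G.Adj d e)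
    (h4 : G.Adj e f) : False := by
  refine aux_no_gadget (N := 4) h ![a,b,c,d,e,f] (aux_inj6 hnd)
    ![{0,1},{0,2},{0,1},{0,3},{0,2},{0,3}] [(0,1),(1,2),(3,4),(4,5)] [0,1,2,3]
    (by decide) (by decide) (by decide) ?_ (by decide)
  intro p hp
  fin_cases hp
  · exact h1
  · exact h2
  · exact h3
  · exact h4

end Aux
section Graph

variable {G : SimpleGraph V}

lemma aux_crossing {l : List V} : ∀ {a b : V}, G.Walk a b → a ∉ l → b ∈ l →
    ∃ x ∈ l, ∃ y, y ∉ l ∧ G.Adj x y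
  | _, _, SimpleGraph.Walk.nil, ha, hb => absurd hb ha
  | a, b, SimpleGraph.Walk.cons (v := w) h q, ha, hb => by
    by_cases hm : w ∈ l
    · exact ⟨w, hm, a, ha, h.symm⟩
    · exact aux_crossing q hm hb

lemma aux_no_three_nbrs [Finite V] (hdeg : ∀ v, (G.neighborSet v).ncard ≤ 2) {x p b y : V}
    (hpb : p ≠ b) (hpy : p ≠ y) (hby : b ≠ y)
    (h1 : G.Adj x p) (h2 : G.Adj x b) (h3 : G.Adj x y) : False := by
  have hsub : ({p, b, y} : Set V) ⊆ G.neighborSet x := by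
    intro z hz
    rcases hz with rfl | rfl | rfl
    exacts [h1, h2, h3]
  have h3' : ({p, b, y} : Set V).ncard = 3 := Set.ncard_eq_three.mpr ⟨p, b, y, hpb, hpy, hby, rfl⟩
  have := Set.ncard_le_ncard hsub (Set.toFinite _)
  have := hdeg x
  omega

lemma aux_step_lemma [Finite V] (hdeg : ∀ v, (G.neighborSet v).ncard ≤ 2) {l : List V}
    (hnd : l.Nodup)
    (hch : l.Chain' G.Adj) {x y : V} (hx : x ∈ l) (hy : y ∉ l) (hadj : G.Adj x y) :
    ∃ l' : List V, l'.Nodup ∧ l'.Chain' G.Adj ∧ l'.length = l.length + 1 ∧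
      ∀ v ∈ l', v ∈ l ∨ v = y := by
  obtain ⟨l₁, l₂, rfl⟩ := List.append_of_mem hx
  match l₁, l₂ with
  | [], l₂ =>
    refine ⟨y :: x :: l₂, ?_, ?_, by simp, ?_⟩
    · simp only [List.nodup_cons]
      exact ⟨by simpa using hy, by simpa using hnd⟩
    · rw [List.Chain', List.isChain_cons_cons]
      exact ⟨hadj.symm, by simpa [List.Chain'] using hch⟩
    · intro v hv
      rcases List.mem_cons.mp hv with rfl | hv
      · exact Or.inr rfl
      · exact Or.inl (by simpa using hv)
  | a :: l₁, [] =>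
    refine ⟨(a :: l₁ ++ [x]) ++ [y], ?_, ?_, by simp, ?_⟩
    · rw [List.nodup_append]
      refine ⟨hnd, List.nodup_singleton y, ?_⟩
      intro v hv
      simp only [List.mem_singleton]
      rintro _ rfl rfl
      exact hy hv
    · refine List.IsChain.append hch (List.isChain_singleton y) ?_
      intro u hu z hz
      simp only [List.getLast?_concat, Option.mem_def, Option.some.injEq] at hu
      simp only [List.head?_cons, Option.mem_def, Option.some.injEq] at hz
      subst hu; subst hz; exact hadj
    · intro v hv
      rcases List.mem_append.mp hv with hv | hv
      · exact Or.inl hv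
      · exact Or.inr (by simpa using hv)
  | a :: l₁, b :: l₂ =>
    exfalso
    have hne : (a :: l₁) ≠ [] := by simp
    have hch' := List.isChain_append.mp hch
    have hprev : G.Adj ((a :: l₁).getLast hne) x := by
      apply hch'.2.2
      · rw [List.getLast?_eq_getLast hne]; rfl
      · rfl
    have hnext : G.Adj x b := by
      have := hch'.2.1
      rw [List.isChain_cons_cons] at this
      exact this.1
    have hnd' := List.nodup_append.mp hnd
    have hpmem : (a :: l₁).getLast hne ∈ a :: l₁ := List.getLast_mem _
    have hnotin : (a :: l₁).getLast hne ∉ x :: b :: l₂ := fun hm => hnd'.2.2 _ hpmem _ hm rfl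
    have hpb : (a :: l₁).getLast hne ≠ b := by
      intro hcon; apply hnotin; rw [hcon]; simp
    have hpy : (a :: l₁).getLast hne ≠ y := by
      intro hcon; apply hy; rw [← hcon]; exact List.mem_append.mpr (Or.inl hpmem)
    have hby : b ≠ y := by
      intro hcon; apply hy; rw [← hcon]; simp
    exact aux_no_three_nbrs hdeg hpb hpy hby hprev.symm hnext hadj

lemma aux_adj_supp {c : G.ConnectedComponent} {x y : V} (hx : x ∈ c.supp) (hadj : G.Adj x y) :
    y ∈ c.supp := by
  rw [SimpleGraph.ConnectedComponent.mem_supp_iff] at hx ⊢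
  rw [← hx]
  exact SimpleGraph.ConnectedComponent.sound hadj.symm.reachable

lemma aux_exists_chain [Finite V] (hdeg : ∀ v, (G.neighborSet v).ncard ≤ 2)
    (c : G.ConnectedComponent) :
    ∀ k, 1 ≤ k → k ≤ c.supp.ncard →
      ∃ l : List V, l.Nodup ∧ l.Chain' G.Adj ∧ l.length = k ∧ ∀ v ∈ l, v ∈ c.supp := by
  intro k hk
  induction k, hk using Nat.le_induction with
  | base =>
    intro _
    obtain ⟨v, rfl⟩ := c.exists_rep
    exact ⟨[v], by simp, List.isChain_singleton v, by simp, by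
      simp only [List.mem_singleton]
      rintro v rfl
      exact SimpleGraph.ConnectedComponent.mem_supp_iff _ _ |>.mpr rfl⟩
  | succ k hk ih =>
    intro hcard
    obtain ⟨l, hnd, hch, hlen, hsupp⟩ := ih (le_trans (Nat.le_succ k) hcard)
    classical
    have hne : l ≠ [] := by
      intro hcon; rw [hcon] at hlen; simp at hlen; omega
    have hex : ∃ w ∈ c.supp, w ∉ l := by
      by_contra hcon
      push_neg at hcon
      have hsub : c.supp ⊆ (l.toFinset : Set V) := by
        intro w hw
        simpa using hcon w hw
      have h1 : c.supp.ncard ≤ (l.toFinset : Set V).ncard :=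
        Set.ncard_le_ncard hsub (Set.toFinite _)
      rw [Set.ncard_coe_finset, List.toFinset_card_of_nodup hnd] at h1
      omega
    obtain ⟨w, hw, hwl⟩ := hex
    have haa : l.head hne ∈ l := List.head_mem hne
    have hha : l.head hne ∈ c.supp := hsupp _ haa
    have hreach : G.Reachable w (l.head hne) := by
      rw [SimpleGraph.ConnectedComponent.mem_supp_iff] at hw hha
      exact SimpleGraph.ConnectedComponent.exact (hw.trans hha.symm)
    obtain ⟨x, hxl, y, hyl, hadj⟩ := aux_crossing hreach.some hwl haa
    obtain ⟨l', hnd', hch', hlen', hmem'⟩ := aux_step_lemma hdeg hnd hch hxl hyl hadj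
    refine ⟨l', hnd', hch', by omega, ?_⟩
    intro v hv
    rcases hmem' v hv with hv | rfl
    · exact hsupp v hv
    · exact aux_adj_supp (hsupp x hxl) hadj

end Graph

lemma aux_len4 {α : Type*} {l : List α} (h : l.length = 4) : ∃ a b c d, l = [a,b,c,d] := by
  rcases l with _ | ⟨a, l⟩
  · simp at h
  · simp only [List.length_cons, Nat.succ_inj] at h
    rw [List.length_eq_three] at h
    obtain ⟨b, c, d, rfl⟩ := h
    exact ⟨a, b, c, d, rfl⟩

lemma aux_len5 {α : Type*} {l : List α} (h : l.length = 5) : ∃ a b c d e, l = [a,b,c,d,e] := by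
  rcases l with _ | ⟨a, l⟩
  · simp at h
  · simp only [List.length_cons, Nat.succ_inj] at h
    obtain ⟨b, c, d, e, rfl⟩ := aux_len4 h
    exact ⟨a, b, c, d, e, rfl⟩

lemma aux_len6 {α : Type*} {l : List α} (h : l.length = 6) : ∃ a b c d e f, l = [a,b,c,d,e,f] := by
  rcases l with _ | ⟨a, l⟩
  · simp at h
  · simp only [List.length_cons, Nat.succ_inj] at h
    obtain ⟨b, c, d, e, f, rfl⟩ := aux_len5 h
    exact ⟨a, b, c, d, e, f, rfl⟩

theorem stmt_10 [Fintype V] (G : SimpleGraph V)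
    (h : ProportionallyChoosable G 2) :
    IsLinearForest G ∧ SmallComponents G := by
  classical
  -- max degree at most 2
  have hdeg : ∀ v, (G.neighborSet v).ncard ≤ 2 := by
    intro v
    by_contra hcon
    push_neg at hcon
    have hfin := (G.neighborSet v).toFinite
    have hcard : 3 ≤ hfin.toFinset.card := by
      rw [← Set.ncard_eq_toFinset_card _ hfin]
      omega
    obtain ⟨a, ha⟩ := Finset.card_pos.mp (show 0 < hfin.toFinset.card by omega)
    have hca : 2 ≤ (hfin.toFinset.erase a).card := by
      have := Finset.card_erase_of_mem ha
      omega
    obtain ⟨b, hb⟩ := Finset.card_pos.mp (show 0 < (hfin.toFinset.erase a).card by omega)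
    have hcb : 1 ≤ ((hfin.toFinset.erase a).erase b).card := by
      have := Finset.card_erase_of_mem hb
      omega
    obtain ⟨c, hc⟩ := Finset.card_pos.mp (show 0 < ((hfin.toFinset.erase a).erase b).card by omega)
    obtain ⟨hba, hbs⟩ := Finset.mem_erase.mp hb
    obtain ⟨hcb', hcs'⟩ := Finset.mem_erase.mp hc
    obtain ⟨hca', hcs⟩ := Finset.mem_erase.mp hcs'
    have hva : G.Adj v a := hfin.mem_toFinset.mp ha
    have hvb : G.Adj v b := hfin.mem_toFinset.mp hbs
    have hvc : G.Adj v c := hfin.mem_toFinset.mp hcs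
    have hnd : [v,a,b,c].Nodup := by
      simp only [List.nodup_cons, List.mem_cons, List.mem_singleton, List.not_mem_nil,
        not_or, List.nodup_nil, and_true, or_false]
      exact ⟨⟨hva.ne, hvb.ne, hvc.ne⟩, ⟨fun e => hba e.symm, fun e => hca' e.symm⟩,
        ⟨fun e => hcb' e.symm, not_false⟩⟩
    exact aux_no_claw h hnd hva hvb hvc
  -- acyclicity
  have hacyc : G.IsAcyclic := by
    intro v p hp
    have h3 := hp.three_le_length
    have hnd : p.support.tail.Nodup := hp.support_nodup
    have hchain : List.Chain' G.Adj (v :: p.support.tail) := by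
      rw [← p.support_eq_cons]; exact p.isChain_adj_support
    have hlen : p.support.tail.length = p.length := by
      rw [List.length_tail, p.length_support]
      omega
    have hlast : p.support.getLast? = some v := by
      rw [List.getLast?_eq_getLast p.support_ne_nil, p.getLast_support]
    rw [p.support_eq_cons] at hlast
    by_cases h6 : 6 ≤ p.length
    · -- long cycle : contains two disjoint paths on 3 vertices
      have hnd6 : (p.support.tail.take 6).Nodup := (List.take_sublist 6 _).nodup hnd
      have hch6 : List.Chain' G.Adj (p.support.tail.take 6) := hchain.tail.take 6
      have hlen6 : (p.support.tail.take 6).length = 6 := by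
        rw [List.length_take]
        omega
      obtain ⟨a, b, c, d, e, f, heq⟩ := aux_len6 hlen6
      rw [heq] at hnd6 hch6
      simp only [List.Chain', List.isChain_cons_cons, List.isChain_singleton, and_true] at hch6
      exact aux_no_two_p3 h hnd6 hch6.1 hch6.2.1 hch6.2.2.2.1 hch6.2.2.2.2
    · have : p.length = 3 ∨ p.length = 4 ∨ p.length = 5 := by omega
      rcases this with hn | hn | hn
      · obtain ⟨a, b, w, heq⟩ := List.length_eq_three.mp (hlen.trans hn)
        rw [heq] at hnd hchain hlast
        simp only [List.getLast?_cons_cons, List.getLast?_singleton,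
          Option.some.injEq] at hlast
        subst hlast
        simp only [List.Chain', List.isChain_cons_cons, List.isChain_singleton, and_true] at hchain
        exact aux_no_c3 h hnd hchain.2.1 hchain.2.2 hchain.1
      · obtain ⟨a, b, c, w, heq⟩ := aux_len4 (hlen.trans hn)
        rw [heq] at hnd hchain hlast
        simp only [List.getLast?_cons_cons, List.getLast?_singleton,
          Option.some.injEq] at hlast
        subst hlast
        simp only [List.Chain', List.isChain_cons_cons, List.isChain_singleton, and_true] at hchain
        exact aux_no_c4 h hnd hchain.2.1 hchain.2.2.1 hchain.2.2.2 hchain.1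
      · obtain ⟨a, b, c, d, w, heq⟩ := aux_len5 (hlen.trans hn)
        rw [heq] at hnd hchain hlast
        simp only [List.getLast?_cons_cons, List.getLast?_singleton,
          Option.some.injEq] at hlast
        subst hlast
        simp only [List.Chain', List.isChain_cons_cons, List.isChain_singleton, and_true] at hchain
        exact aux_no_c5 h hnd hchain.2.1 hchain.2.2.1 hchain.2.2.2.1 hchain.2.2.2.2 hchain.1
  -- components have at most 5 vertices
  have hsupp5 : ∀ c : G.ConnectedComponent, c.supp.ncard ≤ 5 := by
    intro c
    by_contra hcon
    push_neg at hcon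
    obtain ⟨l, hnd, hch, hlen, -⟩ := aux_exists_chain hdeg c 6 (by omega) (by omega)
    obtain ⟨a, b, c', d, e, f, rfl⟩ := aux_len6 hlen
    simp only [List.Chain', List.isChain_cons_cons, List.isChain_singleton, and_true] at hch
    exact aux_no_two_p3 h hnd hch.1 hch.2.1 hch.2.2.2.1 hch.2.2.2.2
  -- at most one component with more than 2 vertices
  have huniq : ∀ c d : G.ConnectedComponent, c ≠ d →
      c.supp.ncard ≤ 2 ∨ d.supp.ncard ≤ 2 := by
    intro c d hcd
    by_contra hcon
    push_neg at hcon
    obtain ⟨hc3, hd3⟩ := hcon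
    obtain ⟨l, hnd, hch, hlen, hls⟩ := aux_exists_chain hdeg c 3 (by omega) (by omega)
    obtain ⟨l', hnd', hch', hlen', hls'⟩ := aux_exists_chain hdeg d 3 (by omega) (by omega)
    obtain ⟨a, b, c0, rfl⟩ := List.length_eq_three.mp hlen
    obtain ⟨a', b', c0', rfl⟩ := List.length_eq_three.mp hlen'
    have hdisj : ∀ x ∈ [a, b, c0], x ∉ [a', b', c0'] := by
      intro x hx hx'
      have h1 := hls x hx
      have h2 := hls' x hx'
      rw [SimpleGraph.ConnectedComponent.mem_supp_iff] at h1 h2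
      exact hcd (h1 ▸ h2 ▸ rfl)
    have hndall : [a, b, c0, a', b', c0'].Nodup := by
      have : [a, b, c0, a', b', c0'] = [a, b, c0] ++ [a', b', c0'] := rfl
      rw [this, List.nodup_append]
      exact ⟨hnd, hnd', fun x hx y hy hxy => hdisj x hx (hxy ▸ hy)⟩
    simp only [List.Chain', List.isChain_cons_cons, List.isChain_singleton, and_true] at hch hch'
    exact aux_no_two_p3 h hndall hch.1 hch.2 hch'.1 hch'.2
  exact ⟨⟨hacyc, hdeg⟩, hsupp5, huniq⟩
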